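/- Let h : ℝ₊ → ℝ ∪ {+∞} be convex, lower semicontinuous and superlinear at +∞. Then there exists an increasing sequence hₙ of convex l.s.c. functions, each finite in a neighborhood of 0 with finite right derivative at 0 and superlinear at +∞, such that h(x) = lim_{n→∞} hₙ(x) for every x ∈ ℝ₊. -/

import Mathlib

open Filter Topology

namespace Stmt5Aux

open Set

lemma keybound (k x : ℝ) : k * x - k ^ 2 ≤ x ^ 2 / 4 := by nlinarith [sq_nonneg (x / 2 - k)]

section phi

variable {C : ℕ → ℝ} (hC : ∀ k : ℕ, (k : ℝ) ^ 2 ≤ C k)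

noncomputable def phi (C : ℕ → ℝ) (x : ℝ) : ℝ := ⨆ k : ℕ, ((k : ℝ) * x - C k)

include hC

lemma phi_bdd (x : ℝ) : BddAbove (range fun k : ℕ => (k : ℝ) * x - C k) := by
  refine ⟨x ^ 2 / 4, ?_⟩
  rintro s ⟨k, rfl⟩
  have := keybound (k : ℝ) x
  have := hC k
  simp only
  linarith

lemma le_phi (k : ℕ) (x : ℝ) : (k : ℝ) * x - C k ≤ phi C x :=
  le_ciSup (phi_bdd hC x) k

lemma phi_convex : ConvexOn ℝ (univ : Set ℝ) (phi C) := by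
  refine ⟨convex_univ, fun a _ b _ ta tb hta htb hab => ?_⟩
  refine ciSup_le fun k => ?_
  have h1 := le_phi hC k a
  have h2 := le_phi hC k b
  simp only [smul_eq_mul]
  have e : (k : ℝ) * (ta * a + tb * b) - C k
      = ta * ((k : ℝ) * a - C k) + tb * ((k : ℝ) * b - C k) := by
    linear_combination (C k) * hab
  rw [e]
  exact add_le_add (mul_le_mul_of_nonneg_left h1 hta) (mul_le_mul_of_nonneg_left h2 htb)

lemma phi_continuous : Continuous (phi C) :=
  (phi_convex hC).locallyLipschitz.continuous

lemma phi_superlinear : Tendsto (fun x => phi C x / x) atTop atTop := by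
  rw [tendsto_atTop]
  intro b
  obtain ⟨k, hk⟩ := exists_nat_ge (b + 1)
  filter_upwards [eventually_ge_atTop (max 1 |C k|)] with x hx
  have hx1 : (1 : ℝ) ≤ x := le_trans (le_max_left _ _) hx
  have hx0 : (0 : ℝ) < x := by linarith
  have hCk : |C k| ≤ x := le_trans (le_max_right _ _) hx
  have h1 : (k : ℝ) * x - C k ≤ phi C x := le_phi hC k x
  have h2 : C k / x ≤ 1 := by
    rw [div_le_one hx0]
    exact (le_abs_self _).trans hCk
  have h3 : b ≤ ((k : ℝ) * x - C k) / x := by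
    rw [sub_div, mul_div_assoc, div_self (ne_of_gt hx0), mul_one]
    linarith
  exact h3.trans (div_le_div_iff_of_pos_right hx0 |>.2 h1)

end phi

lemma convex_rightderiv {f : ℝ → ℝ} (hf : ConvexOn ℝ (univ : Set ℝ) f) :
    ∃ L : ℝ, Tendsto (fun x => (f x - f 0) / x) (𝓝[>] (0:ℝ)) (𝓝 L) := by
  have hmono := hf.slope_mono (mem_univ (0 : ℝ))
  have hmono' : MonotoneOn (slope f 0) (Ioi (0 : ℝ)) :=
    hmono.mono fun x hx => ⟨mem_univ x, ne_of_gt hx⟩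
  have hbdd : BddBelow (slope f 0 '' Ioi (0 : ℝ)) := by
    refine ⟨slope f 0 (-1), ?_⟩
    rintro s ⟨x, hx, rfl⟩
    exact hmono ⟨mem_univ _, by norm_num⟩ ⟨mem_univ _, ne_of_gt hx⟩ (by linarith [mem_Ioi.1 hx])
  refine ⟨_, (hmono'.tendsto_nhdsGT hbdd).congr fun x => ?_⟩
  rw [slope_def_field, sub_zero]

variable {h : ℝ → EReal}

lemma linear_bound (hsuper : Tendsto (fun x : ℝ => h x / (x : EReal)) atTop (nhds ⊤))
    (k : ℕ) : ∃ R : ℝ, 1 ≤ R ∧ ∀ x, R ≤ x → (((k : ℝ) * x : ℝ) : EReal) ≤ h x := by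
  have hev := (EReal.tendsto_nhds_top_iff_real.1 hsuper) (k : ℝ)
  obtain ⟨R0, hR0⟩ := eventually_atTop.1 hev
  refine ⟨max R0 1, le_max_right _ _, fun x hx => ?_⟩
  have hx1 : (1 : ℝ) ≤ x := le_trans (le_max_right _ _) hx
  have hx0 : (0 : ℝ) < x := by linarith
  have h2 : (((k : ℝ) : EReal)) ≤ h x / (x : EReal) :=
    le_of_lt (hR0 x (le_trans (le_max_left _ _) hx))
  rw [EReal.le_div_iff_mul_le (by exact_mod_cast hx0) (EReal.coe_ne_top x)] at h2
  rwa [EReal.coe_mul]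

lemma compact_lb (hbot : ∀ x, h x ≠ ⊥) (hlsc : LowerSemicontinuousOn h (Set.Ici 0))
    (R : ℝ) (hR : 0 ≤ R) : ∃ m : ℝ, ∀ y ∈ Icc (0:ℝ) R, (m : EReal) ≤ h y := by
  have key : ∀ y : ℝ, ∃ c : ℝ, ∃ V : Set ℝ, V ∈ 𝓝 y ∧
      (y ∈ Icc (0:ℝ) R → ∀ z ∈ V ∩ Ici (0:ℝ), (c : EReal) ≤ h z) := by
    intro y
    by_cases hy : y ∈ Icc (0:ℝ) R
    · have hby : (⊥ : EReal) < h y := Ne.bot_lt (hbot y)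
      obtain ⟨c, -, hc⟩ := EReal.lt_iff_exists_real_btwn.1 hby
      have hev := hlsc y hy.1 (c : EReal) hc
      obtain ⟨u, hu_open, hyu, hsub⟩ := mem_nhdsWithin.1 hev
      exact ⟨c, u, hu_open.mem_nhds hyu, fun _ z hz => le_of_lt (hsub hz)⟩
    · exact ⟨0, univ, univ_mem, fun hy' => absurd hy' hy⟩
  choose c V hV hc using key
  obtain ⟨t, htmem, hcover⟩ :=
    (isCompact_Icc : IsCompact (Icc (0:ℝ) R)).elim_nhds_subcover V (fun y _ => hV y)
  have h0mem : (0:ℝ) ∈ Icc (0:ℝ) R := ⟨le_refl _, hR⟩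
  obtain ⟨i, hit, -⟩ := mem_iUnion₂.1 (hcover h0mem)
  refine ⟨t.inf' ⟨i, hit⟩ c, fun y hy => ?_⟩
  obtain ⟨j, hjt, hyV⟩ := mem_iUnion₂.1 (hcover hy)
  refine le_trans ?_ (hc j (htmem j hjt) y ⟨hyV, hy.1⟩)
  exact EReal.coe_le_coe_iff.2 (Finset.inf'_le c hjt)

lemma exists_lb (hbot : ∀ x, h x ≠ ⊥) (hlsc : LowerSemicontinuousOn h (Set.Ici 0))
    (hsuper : Tendsto (fun x : ℝ => h x / (x : EReal)) atTop (nhds ⊤)) :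
    ∃ m : ℝ, m ≤ 0 ∧ ∀ y, 0 ≤ y → (m : EReal) ≤ h y := by
  obtain ⟨R, hR1, hR⟩ := linear_bound (h := h) hsuper 1
  obtain ⟨m, hm⟩ := compact_lb hbot hlsc R (by linarith)
  refine ⟨min m 0, min_le_right _ _, fun y hy => ?_⟩
  rcases le_total y R with hyR | hyR
  · exact le_trans (EReal.coe_le_coe_iff.2 (min_le_left _ _)) (hm y ⟨hy, hyR⟩)
  · refine le_trans ?_ (hR y hyR)
    refine EReal.coe_le_coe_iff.2 ?_
    simp only [Nat.cast_one, one_mul]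
    calc min m 0 ≤ 0 := min_le_right _ _
    _ ≤ y := hy

end Stmt5Aux

open Stmt5Aux Set in
/-- Approximation of a convex l.s.c. superlinear function `h : ℝ₊ → ℝ ∪ {+∞}` by an
increasing sequence `hₙ` of convex l.s.c. functions, each finite in a neighborhood of `0`
with finite right derivative at `0` and superlinear, converging pointwise to `h`. -/
theorem stmt_5 (h : ℝ → EReal)
    (hbot : ∀ x, h x ≠ ⊥)
    (hconv : ∀ x y : ℝ, 0 ≤ x → 0 ≤ y → ∀ t : ℝ, t ∈ Set.Icc (0:ℝ) 1 →
      h (t * x + (1 - t) * y) ≤ (t : EReal) * h x + ((1 - t : ℝ) : EReal) * h y)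
    (hlsc : LowerSemicontinuousOn h (Set.Ici 0))
    (hproper : ∃ x : ℝ, 0 ≤ x ∧ h x ≠ ⊤)
    (hsuper : Tendsto (fun x : ℝ => h x / (x : EReal)) atTop (nhds ⊤)) :
    ∃ hn : ℕ → ℝ → EReal,
      (∀ n x, hn n x ≠ ⊥) ∧
      (∀ n, ∀ x y : ℝ, 0 ≤ x → 0 ≤ y → ∀ t : ℝ, t ∈ Set.Icc (0:ℝ) 1 →
        hn n (t * x + (1 - t) * y) ≤ (t : EReal) * hn n x + ((1 - t : ℝ) : EReal) * hn n y) ∧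
      (∀ n, LowerSemicontinuousOn (hn n) (Set.Ici 0)) ∧
      (∀ n, ∃ δ > (0:ℝ), ∀ x ∈ Set.Ico (0:ℝ) δ, hn n x ≠ ⊤) ∧
      (∀ n, ∃ L : ℝ, Tendsto (fun x : ℝ => ((hn n x).toReal - (hn n 0).toReal) / x)
        (nhdsWithin 0 (Set.Ioi 0)) (nhds L)) ∧
      (∀ n, Tendsto (fun x : ℝ => hn n x / (x : EReal)) atTop (nhds ⊤)) ∧
      (∀ n x, 0 ≤ x → hn n x ≤ hn (n + 1) x) ∧
      (∀ x, 0 ≤ x → Tendsto (fun n => hn n x) atTop (nhds (h x))) := by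
  classical
  obtain ⟨m, hm0, hm⟩ := exists_lb hbot hlsc hsuper
  choose R hR1 hRk using linear_bound (h := h) hsuper
  set C : ℕ → ℝ := fun k => (k : ℝ) ^ 2 + |m| + (k : ℝ) * |R k| with hCdef
  have hC : ∀ k : ℕ, (k : ℝ) ^ 2 ≤ C k := by
    intro k
    have h1 : (0:ℝ) ≤ |m| := abs_nonneg m
    have h2 : (0:ℝ) ≤ (k : ℝ) * |R k| := mul_nonneg (Nat.cast_nonneg k) (abs_nonneg _)
    simp only [hCdef]
    linarith
  set D : Set ℝ := {y | 0 ≤ y ∧ h y ≠ ⊤} with hDdef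
  obtain ⟨x₀, hx₀0, hx₀⟩ := hproper
  have hx₀D : x₀ ∈ D := ⟨hx₀0, hx₀⟩
  set S : ℕ → ℝ → Set ℝ := fun n x => (fun y => (h y).toReal + (n:ℝ) * |x - y|) '' D with hSdef
  have hSne : ∀ n x, (S n x).Nonempty := fun n x => ⟨_, mem_image_of_mem _ hx₀D⟩
  have htoReal_ge : ∀ y ∈ D, m ≤ (h y).toReal := by
    intro y hy
    have := hm y hy.1
    rw [← EReal.coe_toReal hy.2 (hbot y)] at this
    exact_mod_cast this
  have hSlb : ∀ n x, ∀ s ∈ S n x, m ≤ s := by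
    rintro n x s ⟨y, hy, rfl⟩
    dsimp only
    have h1 := htoReal_ge y hy
    have h2 : (0:ℝ) ≤ (n:ℝ) * |x - y| := mul_nonneg (Nat.cast_nonneg n) (abs_nonneg _)
    linarith
  have hSbdd : ∀ n x, BddBelow (S n x) := fun n x => ⟨m, hSlb n x⟩
  set g : ℕ → ℝ → ℝ := fun n x => sInf (S n x) with hgdef
  have hg_le : ∀ n x y, y ∈ D → g n x ≤ (h y).toReal + (n:ℝ) * |x - y| :=
    fun n x y hy => csInf_le (hSbdd n x) (mem_image_of_mem _ hy)
  -- the superlinear minorant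
  have hφ_le_h : ∀ x, 0 ≤ x → ((phi C x : ℝ) : EReal) ≤ h x := by
    intro x hx
    by_cases hxt : h x = ⊤
    · rw [hxt]; exact le_top
    have hxr : h x = ((h x).toReal : EReal) := (EReal.coe_toReal hxt (hbot x)).symm
    rw [hxr]
    rw [EReal.coe_le_coe_iff]
    refine ciSup_le fun k => ?_
    have hmx : m ≤ (h x).toReal := htoReal_ge x ⟨hx, hxt⟩
    rcases le_total x (R k) with hxR | hxR
    · have h1 : (k : ℝ) * x ≤ (k : ℝ) * |R k| :=
        mul_le_mul_of_nonneg_left (hxR.trans (le_abs_self _)) (Nat.cast_nonneg k)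
      have h2 : (0:ℝ) ≤ (k:ℝ)^2 := sq_nonneg _
      have h3 : -|m| ≤ m := neg_abs_le m
      simp only [hCdef]
      linarith
    · have h1 := hRk k x hxR
      rw [hxr] at h1
      have h1' : (k : ℝ) * x ≤ (h x).toReal := by exact_mod_cast h1
      have h2 : (0:ℝ) ≤ C k := le_trans (sq_nonneg _) (hC k)
      linarith
  have hg_le_h : ∀ n x, 0 ≤ x → ((g n x : ℝ) : EReal) ≤ h x := by
    intro n x hx
    by_cases hxt : h x = ⊤
    · rw [hxt]; exact le_top
    have h1 := hg_le n x x ⟨hx, hxt⟩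
    rw [sub_self, abs_zero, mul_zero, add_zero] at h1
    rw [← EReal.coe_toReal hxt (hbot x)]
    exact_mod_cast h1
  -- convexity of g n
  have hDconv : ∀ y1 ∈ D, ∀ y2 ∈ D, ∀ ta tb : ℝ, 0 ≤ ta → 0 ≤ tb → ta + tb = 1 →
      ta * y1 + tb * y2 ∈ D ∧
      (h (ta * y1 + tb * y2)).toReal ≤ ta * (h y1).toReal + tb * (h y2).toReal := by
    intro y1 hy1 y2 hy2 ta tb hta htb hab
    have h1 : h y1 = ((h y1).toReal : EReal) := (EReal.coe_toReal hy1.2 (hbot y1)).symm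
    have h2 : h y2 = ((h y2).toReal : EReal) := (EReal.coe_toReal hy2.2 (hbot y2)).symm
    have hcv := hconv y1 y2 hy1.1 hy2.1 ta ⟨hta, by linarith⟩
    rw [h1, h2, show (1:ℝ) - ta = tb by linarith,
      ← EReal.coe_mul, ← EReal.coe_mul, ← EReal.coe_add] at hcv
    have hne : h (ta * y1 + tb * y2) ≠ ⊤ := (hcv.trans_lt (EReal.coe_lt_top _)).ne
    refine ⟨⟨add_nonneg (mul_nonneg hta hy1.1) (mul_nonneg htb hy2.1), hne⟩, ?_⟩
    have := EReal.toReal_le_toReal hcv (hbot _) (EReal.coe_ne_top _)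
    rwa [EReal.toReal_coe] at this
  have hg_conv : ∀ n, ConvexOn ℝ (univ : Set ℝ) (g n) := by
    intro n
    refine ⟨convex_univ, fun a _ b _ ta tb hta htb hab => ?_⟩
    simp only [smul_eq_mul]
    refine le_of_forall_pos_le_add fun ε hε => ?_
    have hsa : sInf (S n a) < g n a + ε := lt_add_of_pos_right _ hε
    have hsb : sInf (S n b) < g n b + ε := lt_add_of_pos_right _ hε
    obtain ⟨s1, hs1S, hs1⟩ := (csInf_lt_iff (hSbdd n a) (hSne n a)).1 hsa
    obtain ⟨s2, hs2S, hs2⟩ := (csInf_lt_iff (hSbdd n b) (hSne n b)).1 hsb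
    obtain ⟨y1, hy1, rfl⟩ := hs1S
    obtain ⟨y2, hy2, rfl⟩ := hs2S
    obtain ⟨hyD, hyR⟩ := hDconv y1 hy1 y2 hy2 ta tb hta htb hab
    have hkey : g n (ta * a + tb * b) ≤
        (h (ta * y1 + tb * y2)).toReal + (n:ℝ) * |ta * a + tb * b - (ta * y1 + tb * y2)| :=
      hg_le n _ _ hyD
    have habs : |ta * a + tb * b - (ta * y1 + tb * y2)| ≤ ta * |a - y1| + tb * |b - y2| := by
      have e : ta * a + tb * b - (ta * y1 + tb * y2) = ta * (a - y1) + tb * (b - y2) := by ring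
      rw [e]
      calc |ta * (a - y1) + tb * (b - y2)| ≤ |ta * (a - y1)| + |tb * (b - y2)| := abs_add_le _ _
      _ = ta * |a - y1| + tb * |b - y2| := by
          rw [abs_mul, abs_mul, abs_of_nonneg hta, abs_of_nonneg htb]
    have hn0 : (0:ℝ) ≤ (n:ℝ) := Nat.cast_nonneg n
    have hmul1 : ta * ((h y1).toReal + (n:ℝ) * |a - y1|) ≤ ta * (g n a + ε) :=
      mul_le_mul_of_nonneg_left hs1.le hta
    have hmul2 : tb * ((h y2).toReal + (n:ℝ) * |b - y2|) ≤ tb * (g n b + ε) :=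
      mul_le_mul_of_nonneg_left hs2.le htb
    have hmul3 : (n:ℝ) * |ta * a + tb * b - (ta * y1 + tb * y2)|
        ≤ (n:ℝ) * (ta * |a - y1| + tb * |b - y2|) := mul_le_mul_of_nonneg_left habs hn0
    nlinarith [hkey, hyR]
  -- Lipschitz continuity of g n
  have hg_lipkey : ∀ n x x', g n x ≤ g n x' + (n:ℝ) * |x - x'| := by
    intro n x x'
    have hlb : ∀ s ∈ S n x', g n x - (n:ℝ) * |x - x'| ≤ s := by
      rintro s ⟨y, hy, rfl⟩
      dsimp only
      have h1 : g n x ≤ (h y).toReal + (n:ℝ) * |x - y| := hg_le n x y hy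
      have h2 : |x - y| ≤ |x' - y| + |x - x'| := by
        calc |x - y| = |(x - x') + (x' - y)| := by ring_nf
        _ ≤ |x - x'| + |x' - y| := abs_add_le _ _
        _ = |x' - y| + |x - x'| := by ring
      have hn0 : (0:ℝ) ≤ (n:ℝ) := Nat.cast_nonneg n
      nlinarith
    have := le_csInf (hSne n x') hlb
    linarith
  have hg_cont : ∀ n, Continuous (g n) := by
    intro n
    refine LipschitzWith.continuous (K := (n : NNReal)) ?_
    refine LipschitzWith.of_dist_le_mul fun x y => ?_
    rw [Real.dist_eq, Real.dist_eq, NNReal.coe_natCast]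
    have h1 := hg_lipkey n x y
    have h2 := hg_lipkey n y x
    rw [abs_sub_comm y x] at h2
    rw [abs_sub_le_iff]
    constructor <;> linarith
  -- monotonicity in n
  have hg_mono : ∀ n x, g n x ≤ g (n + 1) x := by
    intro n x
    refine le_csInf (hSne (n+1) x) ?_
    rintro s ⟨y, hy, rfl⟩
    dsimp only
    have h1 : g n x ≤ (h y).toReal + (n:ℝ) * |x - y| := hg_le n x y hy
    have h2 : (n:ℝ) * |x - y| ≤ ((n:ℝ)+1) * |x - y| := by
      have := abs_nonneg (x - y)
      nlinarith
    have e : ((n+1 : ℕ):ℝ) = (n:ℝ) + 1 := by push_cast; ring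
    rw [e]
    linarith
  -- convergence of g towards h
  have hg_tend : ∀ x, 0 ≤ x → ∀ M : ℝ, (M : EReal) < h x → ∀ᶠ n : ℕ in atTop, M ≤ g n x := by
    intro x hx M hM
    have hev := hlsc x hx (M : EReal) hM
    obtain ⟨δ, hδ, hball⟩ := Metric.mem_nhdsWithin_iff.1 hev
    obtain ⟨N, hN⟩ := exists_nat_ge ((M - m) / δ)
    filter_upwards [eventually_ge_atTop N] with n hn
    refine le_csInf (hSne n x) ?_
    rintro s ⟨y, hy, rfl⟩
    dsimp only
    have hn0 : (0:ℝ) ≤ (n:ℝ) := Nat.cast_nonneg n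
    by_cases hxy : |x - y| < δ
    · have hyball : y ∈ Metric.ball x δ ∩ Ici (0:ℝ) := by
        refine ⟨?_, hy.1⟩
        rw [Metric.mem_ball, Real.dist_eq, abs_sub_comm]
        exact hxy
      have hMy : (M : EReal) ≤ h y := le_of_lt (hball hyball)
      rw [← EReal.coe_toReal hy.2 (hbot y)] at hMy
      have h1 : M ≤ (h y).toReal := by exact_mod_cast hMy
      have h2 : (0:ℝ) ≤ (n:ℝ) * |x - y| := mul_nonneg hn0 (abs_nonneg _)
      linarith
    · have h1 : m ≤ (h y).toReal := htoReal_ge y hy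
      have h2 : δ ≤ |x - y| := not_lt.1 hxy
      have h3 : (M - m) / δ ≤ (n:ℝ) := hN.trans (Nat.cast_le.2 hn)
      have h4 : M - m ≤ (n:ℝ) * δ := by
        rw [div_le_iff₀ hδ] at h3
        linarith
      have h5 : (n:ℝ) * δ ≤ (n:ℝ) * |x - y| := mul_le_mul_of_nonneg_left h2 hn0
      linarith
  -- the approximating sequence
  set Hf : ℕ → ℝ → ℝ := fun n x => max (g n x) (phi C x) with hHdef
  have hH_conv : ∀ n, ConvexOn ℝ (univ : Set ℝ) (Hf n) := by
    intro n
    have := (hg_conv n).sup (phi_convex hC)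
    exact this
  have hH_le_h : ∀ n x, 0 ≤ x → ((Hf n x : ℝ) : EReal) ≤ h x := by
    intro n x hx
    rcases max_cases (g n x) (phi C x) with ⟨he, -⟩ | ⟨he, -⟩
    · rw [hHdef]; simp only; rw [he]; exact hg_le_h n x hx
    · rw [hHdef]; simp only; rw [he]; exact hφ_le_h x hx
  refine ⟨fun n x => ((Hf n x : ℝ) : EReal), ?_, ?_, ?_, ?_, ?_, ?_, ?_, ?_⟩
  · intro n x
    exact EReal.coe_ne_bot _
  · intro n x y hx hy t ht
    rw [← EReal.coe_mul, ← EReal.coe_mul, ← EReal.coe_add, EReal.coe_le_coe_iff]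
    have := (hH_conv n).2 (mem_univ x) (mem_univ y) ht.1 (by linarith [ht.2] : (0:ℝ) ≤ 1 - t)
      (by ring)
    simpa [smul_eq_mul] using this
  · intro n
    have hcont : Continuous fun x => ((Hf n x : ℝ) : EReal) :=
      continuous_coe_real_ereal.comp ((hg_cont n).max (phi_continuous hC))
    exact hcont.lowerSemicontinuous.lowerSemicontinuousOn _
  · intro n
    exact ⟨1, one_pos, fun x _ => EReal.coe_ne_top _⟩
  · intro n
    obtain ⟨L, hL⟩ := convex_rightderiv (hH_conv n)
    refine ⟨L, ?_⟩
    simpa only [EReal.toReal_coe] using hL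
  · intro n
    rw [EReal.tendsto_nhds_top_iff_real]
    intro r
    have hsl := phi_superlinear hC
    filter_upwards [hsl.eventually_gt_atTop r, eventually_gt_atTop (0:ℝ)] with x hgt hx0
    have h1 : r < Hf n x / x :=
      lt_of_lt_of_le hgt (div_le_div_iff_of_pos_right hx0 |>.2 (le_max_right _ _))
    rw [← EReal.coe_div]
    exact_mod_cast h1
  · intro n x hx
    exact EReal.coe_le_coe_iff.2 (max_le_max (hg_mono n x) (le_refl _))
  · intro x hx
    rw [tendsto_order]
    constructor
    · intro a ha
      obtain ⟨M, haM, hM⟩ := EReal.lt_iff_exists_real_btwn.1 ha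
      filter_upwards [hg_tend x hx M hM] with n hng
      exact lt_of_lt_of_le haM (EReal.coe_le_coe_iff.2 (hng.trans (le_max_left _ _)))
    · intro a ha
      filter_upwards with n
      exact lt_of_le_of_lt (hH_le_h n x hx) ha
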